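/- For the ridged graph R_{3n} (n ≥ 1): γ(R_{3n}) = n and γ'(R_{3n}) = ⌈n/2⌉. -/

import Mathlib

/-- Two elements (vertices or edges) of a graph are *associated* if they are
adjacent or incident. -/
def elemAssoc {V : Type*} (G : SimpleGraph V) : V ⊕ Sym2 V → V ⊕ Sym2 V → Prop
  | .inl u, .inl v => G.Adj u v
  | .inl u, .inr e => u ∈ e
  | .inr e, .inl u => u ∈ e
  | .inr e, .inr f => e ≠ f ∧ ∃ u, u ∈ e ∧ u ∈ f

/-- The set of vertex-elements. -/
def vertElems (V : Type*) : Set (V ⊕ Sym2 V) := Set.range Sum.inl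

/-- The set of edge-elements of `G`. -/
def edgeElems {V : Type*} (G : SimpleGraph V) : Set (V ⊕ Sym2 V) :=
  Sum.inr '' G.edgeSet

/-- `A` dominates `W`: every element of `W \ (A ∩ W)` is associated to an element of `A`. -/
def Dominates {V : Type*} (G : SimpleGraph V) (A W : Set (V ⊕ Sym2 V)) : Prop :=
  ∀ w ∈ W, w ∉ A → ∃ a ∈ A, elemAssoc G a w

/-- `γ_{U,W}(G)`: minimum cardinality of a subset `A ⊆ U` dominating `W`. -/
noncomputable def gammaUW {V : Type*} (G : SimpleGraph V)
    (U W : Set (V ⊕ Sym2 V)) : ℕ :=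
  sInf {n | ∃ A ⊆ U, Dominates G A W ∧ A.ncard = n}

/-- The ridged graph `R_{3n}`.  The vertex `(i, 0)` is `u_{i+1}`, `(i, 1)` is `v_{i+1}`
and `(i, 2)` is `w_{i+1}`.  The `u_i` form a path and each `u_i` has the two pendant
neighbours `v_i`, `w_i`. -/
def ridgedRel (n : ℕ) : Fin n × Fin 3 → Fin n × Fin 3 → Prop
  | (i, c), (j, d) =>
      (c = 0 ∧ d = 0 ∧ (j : ℕ) = (i : ℕ) + 1) ∨ (c = 0 ∧ i = j ∧ (d = 1 ∨ d = 2))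

def ridgedGraph (n : ℕ) : SimpleGraph (Fin n × Fin 3) where
  Adj x y := x ≠ y ∧ (ridgedRel n x y ∨ ridgedRel n y x)
  symm := ⟨fun _ _ ⟨h1, h2⟩ => ⟨h1.symm, h2.symm⟩⟩
  loopless := ⟨fun _ ⟨h1, _⟩ => h1 rfl⟩

section RidgedAuxSec

variable {n : ℕ}

lemma adj_snd_zero {x y : Fin n × Fin 3} (h : (ridgedGraph n).Adj x y) :
    x.2 = 0 ∨ y.2 = 0 := by
  obtain ⟨a, b⟩ := x; obtain ⟨i, c⟩ := y
  obtain ⟨-, h | h⟩ := h <;>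
    rcases h with ⟨h1, -⟩ | ⟨h1, -⟩ <;> simp_all

lemma pend_adj {x : Fin n × Fin 3} {i : Fin n} {c : Fin 3} (hc : c ≠ 0)
    (h : (ridgedGraph n).Adj x (i, c)) : x = (i, 0) := by
  obtain ⟨a, b⟩ := x
  obtain ⟨-, h | h⟩ := h
  · rcases h with ⟨h1, h2, -⟩ | ⟨h1, h2, -⟩
    · exact absurd h2 hc
    · simp_all
  · rcases h with ⟨h1, -⟩ | ⟨h1, -⟩ <;> exact absurd h1 hc

lemma adj_u_pend (i : Fin n) {c : Fin 3} (hc : c = 1 ∨ c = 2) :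
    (ridgedGraph n).Adj (i, 0) (i, c) := by
  refine ⟨?_, Or.inl (Or.inr ⟨rfl, rfl, hc⟩)⟩
  rcases hc with rfl | rfl <;> simp [Prod.ext_iff]

lemma edge_pend {e : Sym2 (Fin n × Fin 3)} (he : e ∈ (ridgedGraph n).edgeSet)
    {i : Fin n} {c : Fin 3} (hc : c ≠ 0) (hm : (i, c) ∈ e) :
    e = s((i, 0), (i, c)) := by
  induction e using Sym2.ind with | _ a b =>
  rw [SimpleGraph.mem_edgeSet] at he
  rcases Sym2.mem_iff.mp hm with rfl | rfl
  · have := pend_adj hc he.symm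
    subst this
    exact Sym2.eq_swap
  · have := pend_adj hc he
    subst this
    rfl

lemma edge_has_u {e : Sym2 (Fin n × Fin 3)} (he : e ∈ (ridgedGraph n).edgeSet) :
    ∃ i : Fin n, ((i, (0 : Fin 3))) ∈ e := by
  induction e using Sym2.ind with | _ a b =>
  rw [SimpleGraph.mem_edgeSet] at he
  rcases adj_snd_zero he with h | h
  · exact ⟨a.1, by rw [show ((a.1, (0:Fin 3))) = a from Prod.ext rfl h.symm]; exact Sym2.mem_mk_left _ _⟩
  · exact ⟨b.1, by rw [show ((b.1, (0:Fin 3))) = b from Prod.ext rfl h.symm]; exact Sym2.mem_mk_right _ _⟩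

def pick (n : ℕ) (k : ℕ) (h1 : 2 * k < n) : Sym2 (Fin n × Fin 3) :=
  if h2 : 2 * k + 1 < n then s((⟨2 * k, h1⟩, 0), (⟨2 * k + 1, h2⟩, 0))
  else s((⟨2 * k, h1⟩, 0), (⟨2 * k, h1⟩, 1))

lemma pick_mem_edgeSet {k : ℕ} (h1 : 2 * k < n) :
    pick n k h1 ∈ (ridgedGraph n).edgeSet := by
  rw [pick]
  split
  · rw [SimpleGraph.mem_edgeSet]
    exact ⟨by simp [Prod.ext_iff, Fin.ext_iff], Or.inl (Or.inl ⟨rfl, rfl, rfl⟩)⟩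
  · rw [SimpleGraph.mem_edgeSet]
    exact ⟨by simp [Prod.ext_iff], Or.inl (Or.inr ⟨rfl, rfl, Or.inl rfl⟩)⟩

lemma mem_pick {k : ℕ} {h1 : 2 * k < n} {x : Fin n × Fin 3} (h : x ∈ pick n k h1) :
    (x.1 : ℕ) = 2 * k ∨ (x.1 : ℕ) = 2 * k + 1 := by
  rw [pick] at h
  split at h <;> rcases Sym2.mem_iff.mp h with rfl | rfl <;> simp

lemma u_mem_pick {k : ℕ} (h1 : 2 * k < n) :
    ((⟨2 * k, h1⟩ : Fin n), (0 : Fin 3)) ∈ pick n k h1 := by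
  rw [pick]; split <;> exact Sym2.mem_mk_left _ _

lemma u_mem_pick' {k : ℕ} (h1 : 2 * k < n) (h2 : 2 * k + 1 < n) :
    ((⟨2 * k + 1, h2⟩ : Fin n), (0 : Fin 3)) ∈ pick n k h1 := by
  rw [pick, dif_pos h2]; exact Sym2.mem_mk_right _ _

end RidgedAuxSec

theorem stmt14 (n : ℕ) (hn : 1 ≤ n) :
    gammaUW (ridgedGraph n) (vertElems (Fin n × Fin 3)) (vertElems (Fin n × Fin 3)) = n ∧
    gammaUW (ridgedGraph n) (edgeElems (ridgedGraph n)) (edgeElems (ridgedGraph n))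
      = (n + 1) / 2 := by
  classical
  constructor
  · -- vertex domination number = n
    set F : Fin n → (Fin n × Fin 3) ⊕ Sym2 (Fin n × Fin 3) :=
      fun i => Sum.inl (i, 0) with hF
    have hFinj : Function.Injective F := by
      intro i j h
      simpa [hF, Prod.ext_iff] using h
    have hmem : n ∈ {m | ∃ A ⊆ vertElems (Fin n × Fin 3),
        Dominates (ridgedGraph n) A (vertElems (Fin n × Fin 3)) ∧ A.ncard = m} := by
      refine ⟨Set.range F, ?_, ?_, ?_⟩
      · rintro _ ⟨i, rfl⟩; exact ⟨(i, 0), rfl⟩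
      · rintro w ⟨⟨i, c⟩, rfl⟩ hw
        have hc : c ≠ 0 := by
          rintro rfl; exact hw ⟨i, rfl⟩
        refine ⟨Sum.inl (i, 0), ⟨i, rfl⟩, ?_⟩
        show (ridgedGraph n).Adj (i, 0) (i, c)
        refine adj_u_pend i ?_
        omega
      · rw [← Set.image_univ, Set.ncard_image_of_injective _ hFinj, Set.ncard_univ]
        simp
    refine le_antisymm (Nat.sInf_le hmem) (le_csInf ⟨n, hmem⟩ ?_)
    rintro m ⟨A, hsub, hdom, rfl⟩
    have key : ∀ i : Fin n, ∃ c : Fin 3, Sum.inl (i, c) ∈ A := by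
      intro i
      by_cases h : Sum.inl ((i, (1 : Fin 3))) ∈ A
      · exact ⟨1, h⟩
      · obtain ⟨a, ha, hassoc⟩ := hdom _ ⟨(i, 1), rfl⟩ h
        obtain ⟨x, rfl⟩ := hsub ha
        have hx : (ridgedGraph n).Adj x (i, 1) := hassoc
        have := pend_adj (by decide) hx
        exact ⟨0, this ▸ ha⟩
    choose c hc using key
    set G : Fin n → (Fin n × Fin 3) ⊕ Sym2 (Fin n × Fin 3) :=
      fun i => Sum.inl (i, c i) with hG
    have hGinj : Function.Injective G := by
      intro i j h
      simp only [hG, Sum.inl.injEq, Prod.mk.injEq] at h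
      exact h.1
    have hsub2 : Set.range G ⊆ A := by rintro _ ⟨i, rfl⟩; exact hc i
    calc n = (Set.range G).ncard := by
            rw [← Set.image_univ, Set.ncard_image_of_injective _ hGinj, Set.ncard_univ]; simp
      _ ≤ A.ncard := Set.ncard_le_ncard hsub2 (Set.toFinite A)
  · -- edge domination number = (n+1)/2
    set m := (n + 1) / 2 with hm
    set F : Fin m → (Fin n × Fin 3) ⊕ Sym2 (Fin n × Fin 3) :=
      fun k => Sum.inr (pick n k.val (by omega)) with hF
    have hFinj : Function.Injective F := by
      intro k k' h
      simp only [hF, Sum.inr.injEq] at h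
      have h1 := u_mem_pick (n := n) (k := k.val) (by omega)
      rw [h] at h1
      have := mem_pick h1
      simp only at this
      apply Fin.ext
      omega
    have hmemB : m ∈ {t | ∃ A ⊆ edgeElems (ridgedGraph n),
        Dominates (ridgedGraph n) A (edgeElems (ridgedGraph n)) ∧ A.ncard = t} := by
      refine ⟨Set.range F, ?_, ?_, ?_⟩
      · rintro _ ⟨k, rfl⟩
        exact ⟨_, pick_mem_edgeSet _, rfl⟩
      · rintro w ⟨e, he, rfl⟩ hw
        obtain ⟨i, hi⟩ := edge_has_u he
        have hk1 : 2 * ((i : ℕ) / 2) < n := by omega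
        have hkm : (i : ℕ) / 2 < m := by omega
        refine ⟨F ⟨(i : ℕ) / 2, hkm⟩, ⟨_, rfl⟩, ?_⟩
        refine ⟨?_, (i, 0), ?_, hi⟩
        · intro hcontra
          exact hw ⟨⟨(i : ℕ) / 2, hkm⟩, by simp [hF, hcontra]⟩
        · show (i, (0:Fin 3)) ∈ pick n ((i:ℕ)/2) _
          by_cases hpar : (i : ℕ) = 2 * ((i : ℕ) / 2)
          · have heq : (i, (0:Fin 3)) = ((⟨2 * ((i:ℕ)/2), hk1⟩ : Fin n), (0:Fin 3)) := by
              rw [Prod.mk.injEq]; exact ⟨Fin.ext hpar, rfl⟩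
            rw [heq]
            exact u_mem_pick _
          · have hodd : (i : ℕ) = 2 * ((i : ℕ) / 2) + 1 := by omega
            have h2 : 2 * ((i : ℕ) / 2) + 1 < n := by omega
            have heq : (i, (0:Fin 3)) = ((⟨2 * ((i:ℕ)/2) + 1, h2⟩ : Fin n), (0:Fin 3)) := by
              rw [Prod.mk.injEq]; exact ⟨Fin.ext hodd, rfl⟩
            rw [heq]
            exact u_mem_pick' _ h2
      · rw [← Set.image_univ, Set.ncard_image_of_injective _ hFinj, Set.ncard_univ]
        simp
    refine le_antisymm (Nat.sInf_le hmemB) (le_csInf ⟨m, hmemB⟩ ?_)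
    rintro t ⟨B, hsub, hdom, rfl⟩
    have key : ∀ i : Fin n, ∃ e : Sym2 (Fin n × Fin 3),
        Sum.inr e ∈ B ∧ ((i, (0 : Fin 3))) ∈ e := by
      intro i
      set p : Sym2 (Fin n × Fin 3) := s((i, 0), (i, 1)) with hp
      have hpe : p ∈ (ridgedGraph n).edgeSet :=
        (ridgedGraph n).mem_edgeSet.mpr (adj_u_pend i (Or.inl rfl))
      by_cases hB : Sum.inr p ∈ B
      · exact ⟨p, hB, Sym2.mem_mk_left _ _⟩
      · obtain ⟨a, ha, hassoc⟩ := hdom _ ⟨p, hpe, rfl⟩ hB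
        obtain ⟨f, hf, rfl⟩ := hsub ha
        obtain ⟨hne, v, hvf, hvp⟩ := hassoc
        rcases Sym2.mem_iff.mp hvp with rfl | rfl
        · exact ⟨f, ha, hvf⟩
        · exact absurd (edge_pend hf (by decide) hvf) hne
    choose g hg1 hg2 using key
    have hBfin : B.Finite := Set.toFinite B
    set Bf := hBfin.toFinset with hBf
    set G : Fin n → (Fin n × Fin 3) ⊕ Sym2 (Fin n × Fin 3) :=
      fun i => Sum.inr (g i) with hG
    have hmap : ∀ i ∈ (Finset.univ : Finset (Fin n)), G i ∈ Bf := by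
      intro i _
      simpa [hBf] using hg1 i
    have hfib : ∀ b ∈ Bf, ({i ∈ (Finset.univ : Finset (Fin n)) | G i = b}).card ≤ 2 := by
      intro b _
      rcases b with v | f
      · have : ({i ∈ (Finset.univ : Finset (Fin n)) | G i = Sum.inl v}) = ∅ := by
          ext i; simp [hG]
        rw [this]; simp
      · induction f using Sym2.ind with | _ x y =>
        have hsubxy : ({i ∈ (Finset.univ : Finset (Fin n)) | G i = Sum.inr s(x, y)}).card ≤
            ({x, y} : Finset (Fin n × Fin 3)).card := by
          apply Finset.card_le_card_of_injOn (fun i => ((i, (0 : Fin 3)) : Fin n × Fin 3))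
          · intro i hi
            simp only [Finset.mem_coe, Finset.mem_filter, Finset.mem_univ, true_and, hG,
              Sum.inr.injEq] at hi
            have := hg2 i
            rw [hi] at this
            rcases Sym2.mem_iff.mp this with h | h <;> simp [h]
          · intro i _ j _ h
            simpa using congrArg Prod.fst h
        calc _ ≤ ({x, y} : Finset (Fin n × Fin 3)).card := hsubxy
          _ ≤ 2 := by
            apply le_trans (Finset.card_insert_le _ _)
            simp
    have hcount := Finset.card_le_mul_card_image_of_maps_to hmap 2 hfib
    have hBcard : Bf.card = B.ncard := (Set.ncard_eq_toFinset_card B hBfin).symm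
    simp only [Finset.card_univ, Fintype.card_fin] at hcount
    rw [hBcard] at hcount
    omega
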